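/- Let p ∈ (1,2) and a > 0, and let ψ : [0,1) → [0,∞) be continuously differentiable with ψ(0) = 0 satisfying ψ'(y) + (p/(p-1)) ψ(y)^{(p-1)/p} = (p a^{2-p}/(p-1))(1-y) for all y ∈ (0,1). If A ∈ (0,1) satisfies A^{(p-1)/p} - A ≥ a^{2-p}, then ψ(y) ≤ A(1-y)^{p/(p-1)} for all y ∈ [0,1). Consequently, since max_{A ∈ (0,1)}(A^{(p-1)/p} - A) = (p-1)^{p-1}/p^p, for every a ∈ (0, (p-1)^{(p-1)/(2-p)} p^{-p/(2-p)}] one has ψ(y)(1-y)^{-p} → 0 as y → 1. -/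

import Mathlib

open Set Filter Topology

/-- `ψ : [0,1) → [0,∞)` is continuously differentiable (with derivative `ψd`), `ψ(0) = 0`,
and `ψ' + (p/(p-1)) ψ^{(p-1)/p} = (p a^{2-p}/(p-1))(1-y)` holds on `(0,1)`. -/
def PsiSol (p a : ℝ) (ψ ψd : ℝ → ℝ) : Prop :=
  (∀ y ∈ Set.Ico (0:ℝ) 1, HasDerivWithinAt ψ (ψd y) (Set.Ico 0 1) y) ∧
  ContinuousOn ψd (Set.Ico 0 1) ∧
  (∀ y ∈ Set.Ico (0:ℝ) 1, 0 ≤ ψ y) ∧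
  ψ 0 = 0 ∧
  (∀ y ∈ Set.Ioo (0:ℝ) 1,
    ψd y + (p/(p-1)) * ψ y ^ ((p-1)/p) = (p * a ^ (2-p) / (p-1)) * (1-y))

/-- Comparison part of statement 13. -/
lemma stmt13_aux (p a : ℝ) (hp : p ∈ Set.Ioo (1:ℝ) 2) (ha : 0 < a)
    (ψ ψd : ℝ → ℝ) (hψ : PsiSol p a ψ ψd) :
    ∀ A ∈ Set.Ioo (0:ℝ) 1, a ^ (2-p) ≤ A ^ ((p-1)/p) - A →
      ∀ y ∈ Set.Ico (0:ℝ) 1, ψ y ≤ A * (1-y) ^ (p/(p-1)) := by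
  obtain ⟨hp1, hp2⟩ := hp
  have hp1' : (0:ℝ) < p - 1 := by linarith
  have hp0 : (0:ℝ) < p := by linarith
  have hcpos : (0:ℝ) < p / (p-1) := div_pos hp0 hp1'
  have hq1 : 1 < p / (p-1) - 1 := by
    rw [lt_sub_iff_add_lt, lt_div_iff₀ hp1']; nlinarith
  have hq2 : (1:ℝ) ≤ p / (p-1) := by linarith
  intro A hA hAa y hy
  have key : ∀ x ∈ Set.Icc (0:ℝ) y,
      ψ x ≤ (fun x : ℝ => A * (1-x) ^ (p/(p-1))) x := by
    apply image_le_of_deriv_right_lt_deriv_boundary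
      (f := ψ) (f' := ψd)
      (B := fun x : ℝ => A * (1-x) ^ (p/(p-1)))
      (B' := fun x : ℝ => -(A * (p/(p-1))) * (1-x) ^ (p/(p-1) - 1))
      (a := 0) (b := y)
    · intro x hx
      have hx' : x ∈ Set.Ico (0:ℝ) 1 := ⟨hx.1, lt_of_le_of_lt hx.2 hy.2⟩
      exact ((hψ.1 x hx').continuousWithinAt).mono
        (fun z hz => ⟨hz.1, lt_of_le_of_lt hz.2 hy.2⟩)
    · intro x hx
      have hx' : x ∈ Set.Ico (0:ℝ) 1 := ⟨hx.1, lt_trans hx.2 hy.2⟩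
      refine (hψ.1 x hx').mono_of_mem_nhdsWithin ?_
      refine mem_nhdsWithin.2 ⟨Set.Iio 1, isOpen_Iio, hx'.2, ?_⟩
      rintro z ⟨hz1, hz2⟩
      exact ⟨le_trans hx.1 hz2, hz1⟩
    · rw [hψ.2.2.2.1]
      simp only [sub_zero, Real.one_rpow, mul_one]
      exact hA.1.le
    · intro x
      have h1 : HasDerivAt (fun x : ℝ => 1 - x) (-1) x := by
        simpa using (hasDerivAt_id x).const_sub 1
      have h2 := (h1.rpow_const (Or.inr hq2)).const_mul A
      exact h2.congr_deriv (by ring)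
    · intro x hx hxeq
      rcases eq_or_lt_of_le hx.1 with h0 | h0
      · exfalso
        have h1 : ψ x = A := by
          rw [hxeq, ← h0]; simp
        rw [← h0, hψ.2.2.2.1] at h1
        exact absurd h1.symm (ne_of_gt hA.1)
      · have hx1 : x < 1 := lt_trans hx.2 hy.2
        have h1x : 0 < 1 - x := by linarith
        have h1x1 : 1 - x < 1 := by linarith
        have hode := hψ.2.2.2.2 x ⟨h0, hx1⟩
        have hBx : ψ x ^ ((p-1)/p) = A ^ ((p-1)/p) * (1 - x) := by
          rw [hxeq, Real.mul_rpow hA.1.le (Real.rpow_nonneg h1x.le _)]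
          congr 1
          rw [← Real.rpow_mul h1x.le]
          rw [show (p/(p-1)) * ((p-1)/p) = 1 by field_simp]
          exact Real.rpow_one _
        rw [hBx] at hode
        have hψd : ψd x = (p * a ^ (2-p) / (p-1)) * (1-x)
            - (p/(p-1)) * (A ^ ((p-1)/p) * (1-x)) := by
          linarith
        have hlt : (1-x) ^ (p/(p-1) - 1) < 1 - x := by
          have h := Real.rpow_lt_rpow_of_exponent_gt h1x h1x1 hq1
          simpa using h
        have step1 : (p * a ^ (2-p) / (p-1)) * (1-x)
            ≤ (p/(p-1)) * ((A ^ ((p-1)/p) - A) * (1-x)) := by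
          have h := mul_le_mul_of_nonneg_right hAa h1x.le
          calc (p * a ^ (2-p) / (p-1)) * (1-x)
              = (p/(p-1)) * (a ^ (2-p) * (1-x)) := by ring
            _ ≤ (p/(p-1)) * ((A ^ ((p-1)/p) - A) * (1-x)) :=
              mul_le_mul_of_nonneg_left h hcpos.le
        have step2 : ψd x ≤ -(A * (p/(p-1))) * (1-x) := by
          rw [hψd]; nlinarith [step1]
        have step3 : -(A * (p/(p-1))) * (1-x)
            < -(A * (p/(p-1))) * (1-x) ^ (p/(p-1) - 1) := by
          have hAc : 0 < A * (p/(p-1)) := mul_pos hA.1 hcpos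
          nlinarith [mul_lt_mul_of_pos_left hlt hAc]
        exact lt_of_le_of_lt step2 step3
  exact key y ⟨hy.1, le_refl y⟩

theorem stmt13 (p a : ℝ) (hp : p ∈ Set.Ioo (1:ℝ) 2) (ha : 0 < a)
    (ψ ψd : ℝ → ℝ) (hψ : PsiSol p a ψ ψd) :
    (∀ A ∈ Set.Ioo (0:ℝ) 1, a ^ (2-p) ≤ A ^ ((p-1)/p) - A →
      ∀ y ∈ Set.Ico (0:ℝ) 1, ψ y ≤ A * (1-y) ^ (p/(p-1))) ∧
    (a ≤ (p-1) ^ ((p-1)/(2-p)) * p ^ (-(p/(2-p))) →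
      Tendsto (fun y => ψ y * (1-y) ^ (-p)) (𝓝[<] (1:ℝ)) (𝓝 0)) := by
  have haux := stmt13_aux p a hp ha ψ ψd hψ
  obtain ⟨hp1, hp2⟩ := hp
  have hp1' : (0:ℝ) < p - 1 := by linarith
  have hp0 : (0:ℝ) < p := by linarith
  have h2p : (0:ℝ) < 2 - p := by linarith
  refine ⟨haux, fun haM => ?_⟩
  -- the maximizing choice A = ((p-1)/p)^p
  set A : ℝ := ((p-1)/p) ^ p with hAdef
  have hb0 : (0:ℝ) < (p-1)/p := div_pos hp1' hp0
  have hb1 : (p-1)/p < 1 := (div_lt_one hp0).2 (by linarith)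
  have hA0 : 0 < A := Real.rpow_pos_of_pos hb0 p
  have hA1 : A < 1 := Real.rpow_lt_one hb0.le hb1 hp0
  have hAα : A ^ ((p-1)/p) = ((p-1)/p) ^ (p-1) := by
    rw [hAdef, ← Real.rpow_mul hb0.le]
    congr 1
    field_simp
  have e1 : (p-1:ℝ) ^ (p-1) * (p-1) = (p-1) ^ p := by
    have h := Real.rpow_add_one (ne_of_gt hp1') (p-1)
    rw [show p - 1 + 1 = p by ring] at h
    exact h.symm
  have e2 : (p:ℝ) ^ (p-1) * p = p ^ p := by
    have h := Real.rpow_add_one (ne_of_gt hp0) (p-1)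
    rw [show p - 1 + 1 = p by ring] at h
    exact h.symm
  have hppos : (0:ℝ) < p ^ p := Real.rpow_pos_of_pos hp0 p
  have hp1pos : (0:ℝ) < p ^ (p-1) := Real.rpow_pos_of_pos hp0 (p-1)
  have hmax : A ^ ((p-1)/p) - A = (p-1) ^ (p-1) / p ^ p := by
    rw [hAα, hAdef, Real.div_rpow hp1'.le hp0.le, Real.div_rpow hp1'.le hp0.le]
    rw [← e1, ← e2]
    field_simp
    ring
  have haA : a ^ (2-p) ≤ A ^ ((p-1)/p) - A := by
    rw [hmax]
    calc a ^ (2-p) ≤ ((p-1) ^ ((p-1)/(2-p)) * p ^ (-(p/(2-p)))) ^ (2-p) :=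
          Real.rpow_le_rpow ha.le haM h2p.le
      _ = (p-1) ^ (p-1) / p ^ p := by
          rw [Real.mul_rpow (Real.rpow_nonneg hp1'.le _) (Real.rpow_nonneg hp0.le _)]
          rw [← Real.rpow_mul hp1'.le, ← Real.rpow_mul hp0.le]
          rw [show (p-1)/(2-p) * (2-p) = p-1 by field_simp]
          rw [show -(p/(2-p)) * (2-p) = -p by field_simp]
          rw [Real.rpow_neg hp0.le]
          ring
  have hbound := haux A ⟨hA0, hA1⟩ haA
  have hqp : 0 < p/(p-1) - p := by
    rw [show p/(p-1) - p = p * (2-p) / (p-1) by field_simp; ring]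
    positivity
  have hmem : Set.Ioo (0:ℝ) 1 ∈ 𝓝[<] (1:ℝ) :=
    Ioo_mem_nhdsLT_of_mem ⟨one_pos, le_refl 1⟩
  apply squeeze_zero' (g := fun y : ℝ => A * (1-y) ^ (p/(p-1) - p))
  · filter_upwards [hmem] with y hy
    exact mul_nonneg (hψ.2.2.1 y ⟨hy.1.le, hy.2⟩) (Real.rpow_nonneg (by linarith [hy.2]) _)
  · filter_upwards [hmem] with y hy
    have h1y : 0 < 1 - y := by linarith [hy.2]
    have h := mul_le_mul_of_nonneg_right (hbound y ⟨hy.1.le, hy.2⟩)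
      (Real.rpow_nonneg h1y.le (-p))
    calc ψ y * (1-y) ^ (-p) ≤ A * (1-y) ^ (p/(p-1)) * (1-y) ^ (-p) := h
      _ = A * (1-y) ^ (p/(p-1) - p) := by
        rw [mul_assoc, ← Real.rpow_add h1y]
        ring_nf
  · have h1 : Tendsto (fun y : ℝ => 1 - y) (𝓝[<] (1:ℝ)) (𝓝 0) := by
      have hc : Continuous (fun y : ℝ => 1 - y) := continuous_const.sub continuous_id
      have := (hc.tendsto 1).mono_left (nhdsWithin_le_nhds (s := Set.Iio (1:ℝ)))
      simpa using this
    have h2 : ContinuousAt (fun t : ℝ => A * t ^ (p/(p-1) - p)) 0 :=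
      continuousAt_const.mul (Real.continuousAt_rpow_const 0 _ (Or.inr hqp.le))
    have h3 := h2.tendsto.comp h1
    simpa [Function.comp_def, Real.zero_rpow (ne_of_gt hqp)] using h3
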